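/- Let n ≥ 2 and l_1,...,l_n be positive integers with l = l_1 + ... + l_n ≥ 5. Let 1 ≤ k ≤ l and let j_1,...,j_n be integers with 0 ≤ j_i ≤ l_i and j_1 + ... + j_n = l - k. Then ∏_{i=1}^n binom(l_i+2, j_i+2) ≤ (2^(k-1)/k!) · 2^(binom(l,2) - binom(l-k,2)) · binom(k; l_1-j_1,...,l_n-j_n). -/

import Mathlib

open Finset

private lemma aux1 : ∀ l : ℕ, 5 ≤ l → 3 * (l + 1) ≤ 2 ^ l := by
  intro l hl
  induction l with
  | zero => omega
  | succ p ih =>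
    rcases Nat.lt_or_ge p 5 with h | h
    · interval_cases p <;> simp_all
    · have h1 := ih h
      have h2 : (3:ℕ) ≤ 2 ^ p := le_trans (by norm_num) h1
      have h3 : 2 ^ (p + 1) = 2 * 2 ^ p := by ring
      omega

private lemma choose_two_succ (s : ℕ) : (s + 1).choose 2 = s.choose 2 + s := by
  rw [Nat.choose_succ_succ' s 1, Nat.choose_one_right, Nat.add_comm]

private lemma key (n l : ℕ) (hn : 2 ≤ n) (L : Fin n → ℕ) (hL : ∀ i, 0 < L i)
    (hsum : ∑ i, L i = l) (hl : 5 ≤ l) :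
    ∀ k, 1 ≤ k → k ≤ l → ∀ m : Fin n → ℕ, (∀ i, m i ≤ L i) → ∑ i, m i = k →
    (if k < l then 3 else 2) * ∏ i, (L i + 2).descFactorial (m i)
      ≤ 2 ^ (k + (l.choose 2 - (l - k).choose 2)) := by
  have hLle : ∀ i, L i + 1 ≤ l := by
    intro i
    have h0 : (0 : ℕ) < n := by omega
    have h1 : (1 : ℕ) < n := by omega
    set a : Fin n := ⟨0, h0⟩
    set b : Fin n := ⟨1, h1⟩
    have hab : a ≠ b := by simp [a, b, Fin.ext_iff]
    obtain ⟨i', hi'⟩ : ∃ i', i' ≠ i := by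
      by_cases h : i = a
      · exact ⟨b, by simp [h, Ne.symm hab]⟩
      · exact ⟨a, fun hc => h hc.symm⟩
    have hmem : i' ∈ univ.erase i := Finset.mem_erase.2 ⟨hi', mem_univ _⟩
    have h2 : L i' ≤ ∑ x ∈ univ.erase i, L x :=
      Finset.single_le_sum (fun _ _ => Nat.zero_le _) hmem
    have h3 : L i + ∑ x ∈ univ.erase i, L x = ∑ x, L x :=
      Finset.add_sum_erase univ L (mem_univ i)
    have := hL i'
    omega
  intro k
  induction k with
  | zero => omega
  | succ k ih =>
    intro hk1 hkl m hm hmsum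
    rcases Nat.eq_zero_or_pos k with rfl | hk
    · -- base case k+1 = 1
      rw [if_pos (by omega)]
      have h1 : ∀ i, (L i + 2).descFactorial (m i) ≤ (l + 1) ^ (m i) := by
        intro i
        exact le_trans (Nat.descFactorial_le_pow _ _)
          (Nat.pow_le_pow_left (by have := hLle i; omega) _)
      have h2 : ∏ i, (L i + 2).descFactorial (m i) ≤ ∏ i, (l + 1) ^ (m i) :=
        Finset.prod_le_prod (fun i _ => Nat.zero_le _) (fun i _ => h1 i)
      have h3 : ∏ i, (l + 1) ^ (m i) = (l + 1) ^ (∑ i, m i) :=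
        Finset.prod_pow_eq_pow_sum univ m (l + 1)
      rw [hmsum] at h3
      have hE : 1 + (l.choose 2 - (l - 1).choose 2) = l := by
        have h := choose_two_succ (l - 1)
        rw [show l - 1 + 1 = l by omega] at h
        omega
      rw [hE]
      calc 3 * ∏ i, (L i + 2).descFactorial (m i) ≤ 3 * (l + 1) ^ 1 := by
            have h4 := le_trans h2 (le_of_eq h3)
            have : ((l:ℕ) + 1) ^ (0 + 1) = (l + 1) ^ 1 := rfl
            omega
        _ = 3 * (l + 1) := by ring
        _ ≤ 2 ^ l := aux1 l hl
    · -- inductive step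
      obtain ⟨i₀, hi₀⟩ : ∃ i, 1 ≤ m i := by
        by_contra h
        push_neg at h
        have : ∑ i, m i = 0 := Finset.sum_eq_zero (fun i _ => by have := h i; omega)
        omega
      set m' : Fin n → ℕ := Function.update m i₀ (m i₀ - 1) with hm'def
      have hm'i₀ : m' i₀ = m i₀ - 1 := Function.update_self _ _ _
      have hm'ne : ∀ i, i ≠ i₀ → m' i = m i := fun i h => Function.update_of_ne h _ _
      have hsm : m i₀ + ∑ x ∈ univ.erase i₀, m x = ∑ x, m x :=
        Finset.add_sum_erase univ m (mem_univ i₀)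
      have hsm' : m' i₀ + ∑ x ∈ univ.erase i₀, m' x = ∑ x, m' x :=
        Finset.add_sum_erase univ m' (mem_univ i₀)
      have herase : ∑ x ∈ univ.erase i₀, m' x = ∑ x ∈ univ.erase i₀, m x :=
        Finset.sum_congr rfl (fun x hx => hm'ne x (Finset.mem_erase.1 hx).1)
      have hm'sum : ∑ i, m' i = k := by omega
      have hm'le : ∀ i, m' i ≤ L i := by
        intro i
        by_cases h : i = i₀
        · subst h; rw [hm'i₀]; exact le_trans (Nat.sub_le _ _) (hm i)
        · rw [hm'ne i h]; exact hm i
      -- product identity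
      set d := L i₀ - m i₀ with hd_def
      have hprod : ∏ i, (L i + 2).descFactorial (m i)
          = (d + 3) * ∏ i, (L i + 2).descFactorial (m' i) := by
        have e1 : (L i₀ + 2).descFactorial (m i₀)
            * ∏ x ∈ univ.erase i₀, (L x + 2).descFactorial (m x)
            = ∏ i, (L i + 2).descFactorial (m i) :=
          Finset.mul_prod_erase univ (fun x => (L x + 2).descFactorial (m x)) (mem_univ i₀)
        have e2 : (L i₀ + 2).descFactorial (m' i₀)
            * ∏ x ∈ univ.erase i₀, (L x + 2).descFactorial (m' x)
            = ∏ i, (L i + 2).descFactorial (m' i) :=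
          Finset.mul_prod_erase univ (fun x => (L x + 2).descFactorial (m' x)) (mem_univ i₀)
        have e3 : ∏ x ∈ univ.erase i₀, (L x + 2).descFactorial (m' x)
            = ∏ x ∈ univ.erase i₀, (L x + 2).descFactorial (m x) :=
          Finset.prod_congr rfl (fun x hx => by rw [hm'ne x (Finset.mem_erase.1 hx).1])
        have e4 : (L i₀ + 2).descFactorial (m i₀)
            = (d + 3) * (L i₀ + 2).descFactorial (m i₀ - 1) := by
          have h5 : m i₀ = (m i₀ - 1) + 1 := by omega
          rw [h5, Nat.descFactorial_succ]
          have h6 : L i₀ + 2 - (m i₀ - 1) = d + 3 := by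
            have := hm i₀; omega
          rw [h6, Nat.add_sub_cancel]
        rw [← e1, ← e2, e3, e4, hm'i₀, mul_assoc]
      have hIH := ih hk (by omega) m' hm'le hm'sum
      rw [if_pos (by omega : k < l)] at hIH
      set s := l - (k + 1) with hs_def
      have hd : d ≤ s := by
        have h2 : ∑ x ∈ univ.erase i₀, m x ≤ ∑ x ∈ univ.erase i₀, L x :=
          Finset.sum_le_sum (fun x _ => hm x)
        have h3 : L i₀ + ∑ x ∈ univ.erase i₀, L x = ∑ x, L x :=
          Finset.add_sum_erase univ L (mem_univ i₀)
        have := hm i₀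
        omega
      have hexp : (k + 1) + (l.choose 2 - s.choose 2)
          = (k + (l.choose 2 - (l - k).choose 2)) + (s + 1) := by
        have hlk : l - k = s + 1 := by omega
        have h := choose_two_succ s
        have hle1 : (s + 1).choose 2 ≤ l.choose 2 := Nat.choose_le_choose 2 (by omega)
        rw [hlk]
        omega
      rw [hexp, pow_add, hprod]
      have hfac : (if k + 1 < l then 3 else 2) * (d + 3) ≤ 3 * 2 ^ (s + 1) := by
        rcases Nat.lt_or_ge (k + 1) l with h | h
        · rw [if_pos h]
          have hs1 : 1 ≤ s := by omega
          have h7 : s < 2 ^ s := Nat.lt_two_pow_self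
          have h8 : 2 ^ (s + 1) = 2 * 2 ^ s := by ring
          have h9 : d + 3 ≤ 2 ^ (s + 1) := by omega
          omega
        · have heq : k + 1 = l := by omega
          rw [if_neg (by omega)]
          have hs0 : s = 0 := by omega
          have hd0 : d = 0 := by omega
          rw [hs0, hd0]
          norm_num
      calc (if k + 1 < l then 3 else 2) * ((d + 3) * ∏ i, (L i + 2).descFactorial (m' i))
          = ((if k + 1 < l then 3 else 2) * (d + 3)) * ∏ i, (L i + 2).descFactorial (m' i) := by
            ring
        _ ≤ (3 * 2 ^ (s + 1)) * ∏ i, (L i + 2).descFactorial (m' i) :=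
            Nat.mul_le_mul_right _ hfac
        _ = 2 ^ (s + 1) * (3 * ∏ i, (L i + 2).descFactorial (m' i)) := by ring
        _ ≤ 2 ^ (s + 1) * 2 ^ (k + (l.choose 2 - (l - k).choose 2)) :=
            Nat.mul_le_mul_left _ hIH
        _ = 2 ^ (k + (l.choose 2 - (l - k).choose 2)) * 2 ^ (s + 1) := by ring

theorem stmt_6 (n : ℕ) (hn : 2 ≤ n) (l : ℕ) (L : Fin n → ℕ)
    (hL : ∀ i, 0 < L i) (hsum : ∑ i, L i = l) (hl : 5 ≤ l)
    (k : ℕ) (hk : 1 ≤ k) (hkl : k ≤ l)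
    (j : Fin n → ℕ) (hj : ∀ i, j i ≤ L i) (hjsum : ∑ i, j i = l - k) :
    (∏ i, (Nat.choose (L i + 2) (j i + 2) : ℝ)) ≤
      2 ^ (k - 1) / (Nat.factorial k : ℝ) *
        2 ^ (Nat.choose l 2 - Nat.choose (l - k) 2) *
        (Nat.multinomial Finset.univ (fun i => L i - j i) : ℝ) := by
  set E := l.choose 2 - (l - k).choose 2 with hE
  set m : Fin n → ℕ := fun i => L i - j i with hm
  have hmle : ∀ i, m i ≤ L i := fun i => Nat.sub_le _ _
  have hmsum : ∑ i, m i = k := by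
    have h1 : ∑ i, (m i + j i) = ∑ i, L i :=
      Finset.sum_congr rfl (fun i _ => by have := hj i; simp only [hm]; omega)
    rw [Finset.sum_add_distrib] at h1
    omega
  have hchoose : ∀ i, (L i + 2).choose (j i + 2) = (L i + 2).choose (m i) := by
    intro i
    have h := hj i
    have h2 : (L i + 2) - (j i + 2) = m i := by simp only [hm]; omega
    rw [← h2, Nat.choose_symm (by omega)]
  -- the natural-number bound
  have hkey := key n l hn L hL hsum hl k hk hkl m hmle hmsum
  rw [← hE] at hkey
  have hN : ∏ i, (L i + 2).descFactorial (m i) ≤ 2 ^ ((k - 1) + E) := by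
    have h2 : 2 * ∏ i, (L i + 2).descFactorial (m i) ≤ 2 ^ (k + E) := by
      split_ifs at hkey with h
      · omega
      · exact hkey
    have hpow : 2 ^ (k + E) = 2 * 2 ^ ((k - 1) + E) := by
      rw [show k + E = ((k - 1) + E) + 1 by omega, pow_succ]
      ring
    omega
  -- real-number manipulation
  have hP : (0:ℝ) < ∏ i, ((m i).factorial : ℝ) :=
    Finset.prod_pos (fun i _ => by positivity)
  rw [← mul_le_mul_iff_of_pos_right hP]
  have hA : (∏ i, ((L i + 2).choose (j i + 2) : ℝ)) * (∏ i, ((m i).factorial : ℝ))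
      = ∏ i, ((L i + 2).descFactorial (m i) : ℝ) := by
    rw [← Finset.prod_mul_distrib]
    refine Finset.prod_congr rfl (fun i _ => ?_)
    rw [hchoose i]
    rw [Nat.descFactorial_eq_factorial_mul_choose]
    push_cast
    ring
  have hk0 : (k.factorial : ℝ) ≠ 0 := by positivity
  have hspec : (Nat.multinomial univ m : ℝ) * ∏ i, ((m i).factorial : ℝ)
      = (k.factorial : ℝ) := by
    have h := Nat.multinomial_spec univ m
    rw [hmsum] at h
    exact_mod_cast by push_cast [← h]; ring
  have hB : (2 ^ (k - 1) / (k.factorial : ℝ) * 2 ^ E * (Nat.multinomial univ m : ℝ))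
      * (∏ i, ((m i).factorial : ℝ)) = 2 ^ (k - 1) * 2 ^ E := by
    calc (2 ^ (k - 1) / (k.factorial : ℝ) * 2 ^ E * (Nat.multinomial univ m : ℝ))
        * (∏ i, ((m i).factorial : ℝ))
        = 2 ^ (k - 1) * 2 ^ E *
            (((Nat.multinomial univ m : ℝ) * ∏ i, ((m i).factorial : ℝ)) / (k.factorial : ℝ)) := by
          ring
      _ = 2 ^ (k - 1) * 2 ^ E := by rw [hspec, div_self hk0, mul_one]
  rw [hA, hB]
  have := hN
  calc (∏ i, ((L i + 2).descFactorial (m i) : ℝ))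
      = ((∏ i, (L i + 2).descFactorial (m i) : ℕ) : ℝ) := by push_cast; ring
    _ ≤ ((2 ^ ((k - 1) + E) : ℕ) : ℝ) := by exact_mod_cast hN
    _ = 2 ^ (k - 1) * 2 ^ E := by push_cast [pow_add]; ring
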